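/- arXiv:0906.5465 — 2 statements merged into one kernel-verified Lean document; each statement's English description precedes it below -/
import Mathlib

section
/- Let F be a probability distribution on a measurable space (𝔛,𝒜), let (e_i)_{i≥1} be an orthonormal system in L²(𝔛,F) (so that E|e_i(X*)| ≤ 1 for X* distributed as F), and let (f_{i_1,…,i_m}) be real coefficients with Σ_{i_1,…,i_m=1}^∞ |f_{i_1,…,i_m}| < ∞ such that f(t_1,…,t_m) = Σ_{i_1,…,i_m≥1} f_{i_1,…,i_m} e_{i_1}(t_1)⋯e_{i_m}(t_m) in L²(𝔛^m,F^m). Then: (i) for independent random variables X*_1,…,X*_m each with distribution F, the multiple series Σ_{i_1,…,i_m≥1} f_{i_1,…,i_m} e_{i_1}(X*_1)⋯e_{i_m}(X*_m) converges absolutely almost surely and its sum equals f(X*_1,…,X*_m) almost surely; and (ii) if (X_{j_1},…,X_{j_m}) is any random vector whose distribution is absolutely continuous with respect to F^m, the same series with X_{j_r} in place of X*_r converges absolutely almost surely and sums to f(X_{j_1},…,X_{j_m}) almost surely. -/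
open MeasureTheory Filter

/-- If a kernel `f` has an `L²(F^m)`-expansion over an orthonormal system
`(e_i)_{i≥1}` with absolutely summable coefficients, then (i) for independent `X*_1,…,X*_m`
with law `F` (i.e. almost everywhere with respect to the product measure `F^m`) the multiple
series converges absolutely and sums to `f`, and (ii) the same holds almost surely for any
random vector whose law is absolutely continuous with respect to `F^m`. -/
theorem stmt3 {𝔛 : Type*} [MeasurableSpace 𝔛] (F : Measure 𝔛) [IsProbabilityMeasure F]
    (m : ℕ) (e : ℕ → 𝔛 → ℝ)
    (he_meas : ∀ i, Measurable (e i))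
    (heL2 : ∀ i, MemLp (e i) 2 F)
    (he_orth : ∀ i j, ∫ x, e i x * e j x ∂F = if i = j then 1 else 0)
    (a : (Fin m → ℕ) → ℝ)
    (ha : Summable fun i : Fin m → ℕ => |a i|)
    (f : (Fin m → 𝔛) → ℝ) (hf_meas : Measurable f)
    (hfL2 : MemLp f 2 (Measure.pi fun _ : Fin m => F))
    (hexp : Tendsto (fun N => ∫ t, (f t - ∑ i ∈ Fintype.piFinset (fun _ : Fin m => Finset.range N),
        a i * ∏ r : Fin m, e (i r) (t r)) ^ 2 ∂(Measure.pi fun _ : Fin m => F))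
      atTop (nhds 0)) :
    (∀ᵐ t ∂(Measure.pi fun _ : Fin m => F),
      (Summable fun i : Fin m → ℕ => |a i * ∏ r : Fin m, e (i r) (t r)|) ∧
      HasSum (fun i : Fin m → ℕ => a i * ∏ r : Fin m, e (i r) (t r)) (f t)) ∧
    (∀ ν : Measure (Fin m → 𝔛), ν ≪ (Measure.pi fun _ : Fin m => F) →
      ∀ᵐ t ∂ν,
        (Summable fun i : Fin m → ℕ => |a i * ∏ r : Fin m, e (i r) (t r)|) ∧
        HasSum (fun i : Fin m → ℕ => a i * ∏ r : Fin m, e (i r) (t r)) (f t)) := by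
  letI : MeasureSpace 𝔛 := ⟨F⟩
  set μ : Measure (Fin m → 𝔛) := Measure.pi fun _ : Fin m => F with hμ
  have hvol : μ = (volume : Measure (Fin m → 𝔛)) := rfl
  set g : (Fin m → ℕ) → (Fin m → 𝔛) → ℝ := fun i t => a i * ∏ r : Fin m, e (i r) (t r) with hg
  set S : ℕ → (Fin m → 𝔛) → ℝ :=
    fun N t => ∑ i ∈ Fintype.piFinset (fun _ : Fin m => Finset.range N), g i t with hS
  -- basic integrability facts about the `e j`
  have heInt : ∀ j, Integrable (e j) F := fun j => (heL2 j).integrable one_le_two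
  have heSq : ∀ j, Integrable (fun x => e j x ^ 2) F := fun j => (heL2 j).integrable_sq
  have habs : ∀ j, ∫ x, |e j x| ∂F ≤ 1 := by
    intro j
    have h1 : ∫ x, |e j x| ∂F ≤ ∫ x, (1 + e j x ^ 2) / 2 ∂F := by
      refine integral_mono (heInt j).abs (((integrable_const 1).add (heSq j)).div_const 2) ?_
      intro x
      simp only [Pi.add_apply]
      nlinarith [sq_abs (e j x), sq_nonneg (|e j x| - 1)]
    have h2 : ∫ x, (1 + e j x ^ 2) / 2 ∂F = 1 := by
      rw [integral_div, integral_add (integrable_const 1) (heSq j)]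
      have : ∫ x, e j x ^ 2 ∂F = 1 := by
        have := he_orth j j; simp at this; simpa [sq] using this
      simp [this]
    linarith
  -- measurability and integrability of the terms
  have hgmeas : ∀ i, Measurable (g i) := by
    intro i
    exact (Finset.measurable_prod Finset.univ fun r _ =>
      (he_meas (i r)).comp (measurable_pi_apply r)).const_mul (a i)
  have hgint : ∀ i, Integrable (g i) μ := by
    intro i
    have : Integrable (fun t : Fin m → 𝔛 => ∏ r : Fin m, e (i r) (t r)) μ := by
      rw [hvol]
      exact Integrable.fintype_prod (f := fun r x => e (i r) x) fun r => heInt (i r)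
    exact this.const_mul (a i)
  have habs_int : ∀ i, ∫ t, |g i t| ∂μ ≤ |a i| := by
    intro i
    have h1 : ∀ t, |g i t| = |a i| * ∏ r : Fin m, |e (i r) (t r)| := by
      intro t; rw [hg]; simp [abs_mul, Finset.abs_prod]
    calc ∫ t, |g i t| ∂μ = |a i| * ∫ t, ∏ r : Fin m, |e (i r) (t r)| ∂μ := by
          simp_rw [h1]; rw [integral_const_mul]
      _ ≤ |a i| * 1 := by
          refine mul_le_mul_of_nonneg_left ?_ (abs_nonneg _)
          have := MeasureTheory.integral_fintype_prod_eq_prod (𝕜 := ℝ) (ι := Fin m) (μ := fun _ => F)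
            (f := fun r x => |e (i r) x|)
          rw [hμ, this]
          exact Finset.prod_le_one (fun r _ => integral_nonneg fun x => abs_nonneg _)
            (fun r _ => habs (i r))
      _ = |a i| := mul_one _
  -- a.e. absolute summability
  have hsumInt : Summable (fun i => ∫ t, |g i t| ∂μ) :=
    Summable.of_nonneg_of_le (fun i => integral_nonneg fun t => abs_nonneg _) habs_int ha
  have hlin : ∀ i, ∫⁻ t, ‖g i t‖₊ ∂μ = ENNReal.ofReal (∫ t, |g i t| ∂μ) := by
    intro i
    rw [lintegral_coe_eq_integral (fun t => ‖g i t‖₊)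
      (by simpa [Real.norm_eq_abs] using (hgint i).abs)]
    simp [Real.norm_eq_abs]
  have htsum_ne : ∑' i, ∫⁻ t, ‖g i t‖₊ ∂μ ≠ ⊤ := by
    simp_rw [hlin]
    have hNN : Summable fun i => (∫ t, |g i t| ∂μ).toNNReal :=
      (NNReal.hasSum_real_toNNReal_of_nonneg
        (fun i => integral_nonneg fun t => abs_nonneg _) hsumInt).summable
    have h2 : ∑' i, ENNReal.ofReal (∫ t, |g i t| ∂μ)
        = ((∑' i, (∫ t, |g i t| ∂μ).toNNReal : NNReal) : ENNReal) := by
      rw [ENNReal.coe_tsum hNN]; rfl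
    rw [h2]; exact ENNReal.coe_ne_top
  have hae_sum : ∀ᵐ t ∂μ, Summable fun i => |g i t| := by
    have hmeas : ∀ i : Fin m → ℕ, AEMeasurable (fun t => (‖g i t‖₊ : ENNReal)) μ :=
      fun i => (hgmeas i).nnnorm.coe_nnreal_ennreal.aemeasurable
    have hlt := ae_lt_top' (AEMeasurable.ennreal_tsum hmeas)
      (by rw [lintegral_tsum hmeas]; exact htsum_ne)
    filter_upwards [hlt] with t ht
    have := ENNReal.tsum_coe_ne_top_iff_summable_coe.1 ht.ne
    simpa [Real.norm_eq_abs] using this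
  -- MemLp of each term and of partial sums
  have hgml2 : ∀ i, MemLp (g i) 2 μ := by
    intro i
    have hPm : Measurable (fun t : Fin m → 𝔛 => ∏ r : Fin m, e (i r) (t r)) :=
      Finset.measurable_prod Finset.univ fun r _ =>
        (show Measurable fun t : Fin m → 𝔛 => e (i r) (t r) from
          (he_meas (i r)).comp (measurable_pi_apply r))
    have hP : MemLp (fun t : Fin m → 𝔛 => ∏ r : Fin m, e (i r) (t r)) 2 μ := by
      refine (memLp_two_iff_integrable_sq hPm.aestronglyMeasurable).2 ?_
      have h2 : (fun t : Fin m → 𝔛 => (∏ r : Fin m, e (i r) (t r)) ^ 2)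
          = fun t : Fin m → 𝔛 => ∏ r : Fin m, (e (i r) (t r)) ^ 2 := by
        funext t; rw [← Finset.prod_pow]
      rw [h2, hvol]
      exact Integrable.fintype_prod (f := fun r x => e (i r) x ^ 2)
        fun r => (heL2 (i r)).integrable_sq
    exact hP.const_mul (a i)
  have hSml2 : ∀ N, MemLp (S N) 2 μ := by
    intro N
    have h1 : S N = ∑ i ∈ Fintype.piFinset (fun _ : Fin m => Finset.range N), g i := by
      funext t; simp [hS]
    rw [h1]
    exact memLp_finset_sum' _ (fun i _ => hgml2 i)
  have hdiff : ∀ N, Integrable (fun t => (f t - S N t) ^ 2) μ := fun N =>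
    (hfL2.sub (hSml2 N)).integrable_sq
  -- convergence in L², hence in measure
  have heLp : ∀ N, eLpNorm (S N - f) 2 μ
      = (ENNReal.ofReal (∫ t, (f t - S N t) ^ 2 ∂μ)) ^ (1/2 : ℝ) := by
    intro N
    rw [eLpNorm_eq_lintegral_rpow_enorm_toReal two_ne_zero ENNReal.ofNat_ne_top,
      ofReal_integral_eq_lintegral_ofReal (hdiff N)
        (Eventually.of_forall fun t => sq_nonneg _)]
    have htr : ((2 : ENNReal)).toReal = (2 : ℝ) := by norm_num
    rw [htr]
    congr 1
    refine lintegral_congr fun t => ?_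
    have hx : ∀ x : ℝ, ‖x‖ₑ ^ (2 : ℝ) = ENNReal.ofReal (x ^ 2) := by
      intro x
      rw [show ((2:ℝ)) = ((2:ℕ):ℝ) by norm_num, ENNReal.rpow_natCast,
        Real.enorm_eq_ofReal_abs, ← ENNReal.ofReal_pow (abs_nonneg x), sq_abs]
    have hst : (S N - f) t = S N t - f t := rfl
    rw [hst, hx]
    congr 1
    ring
  have htend0 : Tendsto (fun N => eLpNorm (S N - f) 2 μ) atTop (nhds 0) := by
    simp_rw [heLp]
    have hexp' : Tendsto (fun N => ∫ t, (f t - S N t) ^ 2 ∂μ) atTop (nhds 0) := hexp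
    have h1 : Tendsto (fun N => ENNReal.ofReal (∫ t, (f t - S N t) ^ 2 ∂μ)) atTop (nhds 0) := by
      have := ENNReal.tendsto_ofReal hexp'
      simpa using this
    have := h1.ennrpow_const (1/2)
    simpa [ENNReal.zero_rpow_of_pos] using this
  have hinm : TendstoInMeasure μ S atTop f :=
    tendstoInMeasure_of_tendsto_eLpNorm two_ne_zero
      (fun N => (hSml2 N).aestronglyMeasurable) hfL2.aestronglyMeasurable htend0
  obtain ⟨ns, hns, hae2⟩ := hinm.exists_seq_tendsto_ae
  -- exhaustion of the index set
  have hfinset : Tendsto (fun N => Fintype.piFinset fun _ : Fin m => Finset.range N)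
      atTop atTop := by
    refine tendsto_atTop_finset_of_monotone ?_ ?_
    · intro N M hNM
      exact Fintype.piFinset_subset _ _ fun r => Finset.range_subset_range.2 hNM
    · intro i
      refine ⟨(Finset.univ.sup i) + 1, ?_⟩
      rw [Fintype.mem_piFinset]
      intro r
      exact Finset.mem_range.2 (Nat.lt_succ_of_le (Finset.le_sup (Finset.mem_univ r)))
  -- main almost-everywhere statement
  have hmain : ∀ᵐ t ∂μ,
      (Summable fun i : Fin m → ℕ => |a i * ∏ r : Fin m, e (i r) (t r)|) ∧
      HasSum (fun i : Fin m → ℕ => a i * ∏ r : Fin m, e (i r) (t r)) (f t) := by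
    filter_upwards [hae_sum, hae2] with t h1 h2
    have hsum2 : Summable fun i => g i t := summable_abs_iff.1 h1
    have hhs : HasSum (fun i => g i t) (∑' i, g i t) := hsum2.hasSum
    have ht1 : Tendsto (fun N => S N t) atTop (nhds (∑' i, g i t)) := hhs.comp hfinset
    have ht2 : Tendsto (fun k => S (ns k) t) atTop (nhds (∑' i, g i t)) :=
      ht1.comp hns.tendsto_atTop
    have heq : ∑' i, g i t = f t := tendsto_nhds_unique ht2 h2
    exact ⟨h1, heq ▸ hhs⟩
  refine ⟨hmain, fun ν hν => hmain.filter_mono hν.ae_le⟩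
end

section
/- Let (Y_i)_{i≥1} be i.i.d. random variables uniformly distributed on [−1,1], let (ξ_i)_{i≥1} be i.i.d. Bernoulli random variables with P(ξ_i = 0) = P(ξ_i = 1) = 1/2, independent of (Y_i), and set X_i := Y_{i+ξ_i}. Let f : [−1,1]² → ℝ be a measurable canonical kernel (∫_{−1}^1 f(t,s) ds = 0 for almost every t and ∫_{−1}^1 f(t,s) dt = 0 for almost every s) such that f(X_1,X_2) and f(Y_1,Y_1) are integrable. Then E f(X_1,X_2) = (1/4)·E f(Y_1,Y_1) = (1/8)∫_{−1}^1 f(y,y) dy. In particular, the expectation E f(X_1,X_2) depends on the values of f on the diagonal {t = s}. -/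
open MeasureTheory ProbabilityTheory Filter

/-- The uniform distribution on `[-1,1]`. -/
noncomputable def uniformIcc : Measure ℝ :=
  (2⁻¹ : ENNReal) • (volume.restrict (Set.Icc (-1 : ℝ) 1))

instance : IsProbabilityMeasure uniformIcc := by
  constructor
  simp only [uniformIcc, Measure.smul_apply, Measure.restrict_apply MeasurableSet.univ,
    Set.univ_inter, Real.volume_Icc, smul_eq_mul]
  rw [show (1 : ℝ) - (-1) = 2 by norm_num, ENNReal.ofReal_ofNat]
  exact ENNReal.inv_mul_cancel two_ne_zero ENNReal.ofNat_ne_top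

/-- If two σ-algebras are independent, then functions measurable with respect to them
are independent. -/
lemma indepFun_of_measurable' {Ω β γ : Type*} [MeasurableSpace Ω] [MeasurableSpace β]
    [MeasurableSpace γ] {P : Measure Ω} {m1 m2 : MeasurableSpace Ω}
    (h : ProbabilityTheory.Indep m1 m2 P) {g : Ω → β} {h' : Ω → γ}
    (hg : Measurable[m1] g) (hh : Measurable[m2] h') : ProbabilityTheory.IndepFun g h' P := by
  rw [ProbabilityTheory.IndepFun_iff]
  rw [ProbabilityTheory.Indep_iff] at h
  rintro t1 t2 ⟨s1, hs1, rfl⟩ ⟨s2, hs2, rfl⟩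
  exact h _ _ (hg hs1) (hh hs2)

set_option maxHeartbeats 2000000 in
/-- With `(Y_i)` i.i.d. uniform on `[−1,1]`, `(ξ_i)` i.i.d. symmetric Bernoulli
independent of `(Y_i)`, and `X_i := Y_{i+ξ_i}`, for any canonical kernel `f` (with respect to the
uniform distribution) with the needed integrability one has
`E f(X_1, X_2) = (1/4)·E f(Y_1, Y_1) = (1/8)·∫_{−1}^1 f(y,y) dy`. -/
theorem stmt10 {Ω : Type*} [MeasurableSpace Ω] (P : Measure Ω) [IsProbabilityMeasure P]
    (Y : ℕ → Ω → ℝ) (ξ : ℕ → Ω → ℕ)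
    (hY_meas : ∀ i, Measurable (Y i))
    (hξ_meas : ∀ i, Measurable (ξ i))
    (hY_indep : iIndepFun Y P)
    (hY_unif : ∀ i, Measure.map (Y i) P = uniformIcc)
    (hξ_indep : iIndepFun ξ P)
    (hξ_vals : ∀ i ω, ξ i ω ≤ 1)
    (hξ0 : ∀ i, P {ω | ξ i ω = 0} = 1 / 2)
    (hξ1 : ∀ i, P {ω | ξ i ω = 1} = 1 / 2)
    (hYξ_indep : Indep
      (⨆ i, MeasurableSpace.comap (Y i) inferInstance)
      (⨆ i, MeasurableSpace.comap (ξ i) inferInstance) P)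
    (X : ℕ → Ω → ℝ) (hX : ∀ i ω, X i ω = Y (i + ξ i ω) ω)
    (f : ℝ → ℝ → ℝ) (hf_meas : Measurable (Function.uncurry f))
    -- canonicity with respect to the uniform distribution on `[−1,1]`
    (hcanon1 : ∀ᵐ t ∂uniformIcc, ∫ s, f t s ∂uniformIcc = 0)
    (hcanon2 : ∀ᵐ s ∂uniformIcc, ∫ t, f t s ∂uniformIcc = 0)
    (hint1 : Integrable (fun ω => f (X 1 ω) (X 2 ω)) P)
    (hint2 : Integrable (fun ω => f (Y 1 ω) (Y 1 ω)) P) :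
    ∫ ω, f (X 1 ω) (X 2 ω) ∂P = (1 / 4) * ∫ ω, f (Y 1 ω) (Y 1 ω) ∂P ∧
    ∫ ω, f (X 1 ω) (X 2 ω) ∂P = (1 / 8) * ∫ y in (-1 : ℝ)..1, f y y := by
  classical
  have hYM : ∀ i, Measurable[⨆ i, MeasurableSpace.comap (Y i) inferInstance] (Y i) := fun i =>
    measurable_iff_comap_le.mpr (le_iSup (fun i => MeasurableSpace.comap (Y i) inferInstance) i)
  have hξM : ∀ i, Measurable[⨆ i, MeasurableSpace.comap (ξ i) inferInstance] (ξ i) := fun i =>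
    measurable_iff_comap_le.mpr (le_iSup (fun i => MeasurableSpace.comap (ξ i) inferInstance) i)
  have hg_measMY : ∀ i j, Measurable[⨆ i, MeasurableSpace.comap (Y i) inferInstance] (fun ω => f (Y i ω) (Y j ω)) := fun i j =>
    hf_meas.comp ((hYM i).prodMk (hYM j))
  have hg_meas : ∀ i j, Measurable (fun ω => f (Y i ω) (Y j ω)) := fun i j =>
    hf_meas.comp ((hY_meas i).prodMk (hY_meas j))
  -- the four events
  set A : ℕ → ℕ → Set Ω := fun a b => {ω | ξ 1 ω = a} ∩ {ω | ξ 2 ω = b} with hAdef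
  have hA_measMξ : ∀ a b : ℕ, MeasurableSet[⨆ i, MeasurableSpace.comap (ξ i) inferInstance] (A a b) := fun a b =>
    ((hξM 1) (measurableSet_singleton a)).inter ((hξM 2) (measurableSet_singleton b))
  have hA_amb : ∀ a b : ℕ, MeasurableSet (A a b) := fun a b =>
    MeasurableSet.inter ((hξ_meas 1) (measurableSet_singleton a))
      ((hξ_meas 2) (measurableSet_singleton b))
  -- probability of each event
  have hPA : ∀ a b : ℕ, a ≤ 1 → b ≤ 1 → P (A a b) = 1 / 4 := by
    intro a b ha hb
    have hind := (hξ_indep.indepFun (show (1 : ℕ) ≠ 2 by norm_num))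
    have h := hind.meas_inter (s := {ω | ξ 1 ω = a}) (t := {ω | ξ 2 ω = b})
      ⟨{a}, measurableSet_singleton a, rfl⟩ ⟨{b}, measurableSet_singleton b, rfl⟩
    rw [hAdef]
    rw [h]
    have h1 : P {ω | ξ 1 ω = a} = 1 / 2 := by
      interval_cases a
      · exact hξ0 1
      · exact hξ1 1
    have h2 : P {ω | ξ 2 ω = b} = 1 / 2 := by
      interval_cases b
      · exact hξ0 2
      · exact hξ1 2
    rw [h1, h2]
    rw [show (1 / 2 : ENNReal) * (1 / 2) = 1 / 4 by
      simp only [one_div]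
      rw [← ENNReal.mul_inv (by norm_num) (by norm_num)]
      norm_num]
  -- main per-term computation
  have key : ∀ a b : ℕ, a ≤ 1 → b ≤ 1 →
      Integrable (fun ω => f (Y (1 + a) ω) (Y (2 + b) ω)) P ∧
      ∫ ω, (A a b).indicator (fun ω => f (X 1 ω) (X 2 ω)) ω ∂P
        = (1 / 4) * ∫ ω, f (Y (1 + a) ω) (Y (2 + b) ω) ∂P := by
    intro a b ha hb
    set g : Ω → ℝ := fun ω => f (Y (1 + a) ω) (Y (2 + b) ω) with hgdef
    -- on A a b, the X's are the corresponding Y's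
    have hEq : ∀ ω, (A a b).indicator (fun ω => f (X 1 ω) (X 2 ω)) ω
        = (A a b).indicator g ω := by
      intro ω
      by_cases hω : ω ∈ A a b
      · obtain ⟨h1, h2⟩ := hω
        rw [Set.indicator_of_mem (show ω ∈ A a b from Set.mem_inter h1 h2),
          Set.indicator_of_mem (show ω ∈ A a b from Set.mem_inter h1 h2)]
        rw [hgdef]
        simp only [hX 1 ω, hX 2 ω]
        rw [show ξ 1 ω = a from h1, show ξ 2 ω = b from h2]
      · simp only [Set.indicator_of_notMem hω]
    -- the indicator of A as a function
    set χ : Ω → ℝ := (A a b).indicator (1 : Ω → ℝ) with hχdef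
    have hχMξ : Measurable[⨆ i, MeasurableSpace.comap (ξ i) inferInstance] χ := measurable_const.indicator (hA_measMξ a b)
    have hχ_amb : Measurable χ := measurable_const.indicator (hA_amb a b)
    have hgχ_indep : IndepFun g χ P :=
      indepFun_of_measurable'  hYξ_indep (hg_measMY _ _) hχMξ
    -- integrability of g via a lintegral argument
    have hgInt : Integrable g P := by
      set gE : Ω → ENNReal := fun ω => (‖g ω‖₊ : ENNReal) with hgEdef
      set χE : Ω → ENNReal := (A a b).indicator (1 : Ω → ENNReal) with hχEdef
      have hgE_MY : Measurable[⨆ i, MeasurableSpace.comap (Y i) inferInstance] gE :=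
        (measurable_coe_nnreal_ennreal.comp measurable_nnnorm).comp (hg_measMY (1 + a) (2 + b))
      have hχE_Mξ : Measurable[⨆ i, MeasurableSpace.comap (ξ i) inferInstance] χE := measurable_const.indicator (hA_measMξ a b)
      have hindepE : IndepFun gE χE P :=
        indepFun_of_measurable'  hYξ_indep hgE_MY hχE_Mξ
      have hgE_amb : Measurable gE :=
        (measurable_coe_nnreal_ennreal.comp measurable_nnnorm).comp (hg_meas (1 + a) (2 + b))
      have hχE_amb : Measurable χE := measurable_const.indicator (hA_amb a b)
      have hlin : ∫⁻ ω, gE ω * χE ω ∂P = (∫⁻ ω, gE ω ∂P) * ∫⁻ ω, χE ω ∂P :=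
        lintegral_mul_eq_lintegral_mul_lintegral_of_indepFun'' hgE_amb.aemeasurable
          hχE_amb.aemeasurable hindepE
      have hχE_int : ∫⁻ ω, χE ω ∂P = 1 / 4 := by
        rw [hχEdef, lintegral_indicator_one (hA_amb a b), hPA a b ha hb]
      have hle : ∫⁻ ω, gE ω * χE ω ∂P ≤ ∫⁻ ω, (‖f (X 1 ω) (X 2 ω)‖₊ : ENNReal) ∂P := by
        apply lintegral_mono
        intro ω
        show gE ω * χE ω ≤ _
        simp only [hgEdef, hχEdef]
        by_cases hω : ω ∈ A a b
        · simp only [Set.indicator_of_mem hω, Pi.one_apply, mul_one]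
          have h2 : (A a b).indicator (fun ω => f (X 1 ω) (X 2 ω)) ω
              = (A a b).indicator g ω := hEq ω
          rw [Set.indicator_of_mem hω, Set.indicator_of_mem hω] at h2
          exact le_of_eq (by rw [← h2])
        · simp only [Set.indicator_of_notMem hω, mul_zero]
          exact zero_le
      have hfin : ∫⁻ ω, (‖f (X 1 ω) (X 2 ω)‖₊ : ENNReal) ∂P < ⊤ := hint1.hasFiniteIntegral
      have hgE_fin : ∫⁻ ω, gE ω ∂P < ⊤ := by
        by_contra htop
        push_neg at htop
        have : ∫⁻ ω, gE ω ∂P = ⊤ := top_le_iff.mp htop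
        rw [hlin, this, hχE_int] at hle
        rw [ENNReal.top_mul (by norm_num)] at hle
        exact absurd (top_le_iff.mp hle) (ne_of_lt hfin)
      exact ⟨(hg_meas (1 + a) (2 + b)).aestronglyMeasurable, hgE_fin⟩
    -- now compute the integral
    have hχInt : Integrable χ P := (integrable_const (1 : ℝ)).indicator (hA_amb a b)
    have hmul : ∫ ω, χ ω * g ω ∂P = (∫ ω, χ ω ∂P) * ∫ ω, g ω ∂P :=
      hgχ_indep.symm.integral_fun_mul_eq_mul_integral hχInt.aestronglyMeasurable hgInt.aestronglyMeasurable
    have hχval : ∫ ω, χ ω ∂P = 1 / 4 := by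
      rw [hχdef]
      rw [integral_indicator_one (hA_amb a b), measureReal_def, hPA a b ha hb]
      simp [ENNReal.toReal_div]
    refine ⟨hgInt, ?_⟩
    have hptwise : ∀ ω, (A a b).indicator (fun ω => f (X 1 ω) (X 2 ω)) ω = χ ω * g ω := by
      intro ω
      rw [hEq ω]
      by_cases hω : ω ∈ A a b
      · simp only [hχdef, Set.indicator_of_mem hω, Pi.one_apply, one_mul]
      · simp only [hχdef, Set.indicator_of_notMem hω, zero_mul]
    calc ∫ ω, (A a b).indicator (fun ω => f (X 1 ω) (X 2 ω)) ω ∂P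
        = ∫ ω, χ ω * g ω ∂P := by exact integral_congr_ae (Filter.Eventually.of_forall hptwise)
      _ = (∫ ω, χ ω ∂P) * ∫ ω, g ω ∂P := hmul
      _ = (1 / 4) * ∫ ω, g ω ∂P := by rw [hχval]
  -- off-diagonal integrals vanish
  have hzero : ∀ i j : ℕ, i ≠ j → Integrable (fun ω => f (Y i ω) (Y j ω)) P →
      ∫ ω, f (Y i ω) (Y j ω) ∂P = 0 := by
    intro i j hij hintij
    have hpair : Measurable (fun ω => (Y i ω, Y j ω)) := (hY_meas i).prodMk (hY_meas j)
    have hmap : P.map (fun ω => (Y i ω, Y j ω)) = uniformIcc.prod uniformIcc := by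
      have h := (indepFun_iff_map_prod_eq_prod_map_map (hY_meas i).aemeasurable
        (hY_meas j).aemeasurable).mp (hY_indep.indepFun hij)
      rw [h, hY_unif i, hY_unif j]
    have h1 : ∫ ω, f (Y i ω) (Y j ω) ∂P
        = ∫ p, Function.uncurry f p ∂(uniformIcc.prod uniformIcc) := by
      rw [← hmap, integral_map hpair.aemeasurable hf_meas.aestronglyMeasurable]
      rfl
    have hintprod : Integrable (Function.uncurry f) (uniformIcc.prod uniformIcc) := by
      rw [← hmap]
      exact (integrable_map_measure hf_meas.aestronglyMeasurable hpair.aemeasurable).mpr hintij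
    rw [h1, integral_prod _ hintprod]
    have : ∀ᵐ t ∂uniformIcc, (fun t => ∫ s, Function.uncurry f (t, s) ∂uniformIcc) t = 0 := by
      filter_upwards [hcanon1] with t ht using ht
    rw [integral_congr_ae this, integral_zero]
  -- diagonal integrals
  have hdiag_meas : Measurable (fun y : ℝ => f y y) :=
    hf_meas.comp (measurable_id.prodMk measurable_id)
  have hdiag : ∀ i : ℕ, ∫ ω, f (Y i ω) (Y i ω) ∂P = ∫ y, f y y ∂uniformIcc := by
    intro i
    rw [← hY_unif i, integral_map (hY_meas i).aemeasurable hdiag_meas.aestronglyMeasurable]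
  -- decomposition of the integrand
  have hdecomp : ∀ ω, f (X 1 ω) (X 2 ω) =
      (A 0 0).indicator (fun ω => f (X 1 ω) (X 2 ω)) ω
    + (A 0 1).indicator (fun ω => f (X 1 ω) (X 2 ω)) ω
    + (A 1 0).indicator (fun ω => f (X 1 ω) (X 2 ω)) ω
    + (A 1 1).indicator (fun ω => f (X 1 ω) (X 2 ω)) ω := by
    intro ω
    have h1 := hξ_vals 1 ω
    have h2 := hξ_vals 2 ω
    rcases Nat.le_one_iff_eq_zero_or_eq_one.mp h1 with e1 | e1 <;>
      rcases Nat.le_one_iff_eq_zero_or_eq_one.mp h2 with e2 | e2 <;>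
      simp [hAdef, Set.indicator_apply, Set.mem_inter_iff, Set.mem_setOf_eq, e1, e2]
  -- integrability of each piece
  have hIntPiece : ∀ a b : ℕ, Integrable
      (fun ω => (A a b).indicator (fun ω => f (X 1 ω) (X 2 ω)) ω) P := fun a b =>
    hint1.indicator (hA_amb a b)
  -- assemble
  have hsum : ∫ ω, f (X 1 ω) (X 2 ω) ∂P
      = (1 / 4) * ∫ ω, f (Y 1 ω) (Y 2 ω) ∂P
      + (1 / 4) * ∫ ω, f (Y 1 ω) (Y 3 ω) ∂P
      + (1 / 4) * ∫ ω, f (Y 2 ω) (Y 2 ω) ∂P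
      + (1 / 4) * ∫ ω, f (Y 2 ω) (Y 3 ω) ∂P := by
    have e : ∫ ω, f (X 1 ω) (X 2 ω) ∂P
        = ∫ ω, ((A 0 0).indicator (fun ω => f (X 1 ω) (X 2 ω)) ω
          + (A 0 1).indicator (fun ω => f (X 1 ω) (X 2 ω)) ω
          + (A 1 0).indicator (fun ω => f (X 1 ω) (X 2 ω)) ω
          + (A 1 1).indicator (fun ω => f (X 1 ω) (X 2 ω)) ω) ∂P :=
      integral_congr_ae (Filter.Eventually.of_forall hdecomp)
    rw [e]
    have i1 : Integrable (fun ω => (A 0 0).indicator (fun ω => f (X 1 ω) (X 2 ω)) ω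
        + (A 0 1).indicator (fun ω => f (X 1 ω) (X 2 ω)) ω) P :=
      (hIntPiece 0 0).add (hIntPiece 0 1)
    have i2 : Integrable (fun ω => ((A 0 0).indicator (fun ω => f (X 1 ω) (X 2 ω)) ω
        + (A 0 1).indicator (fun ω => f (X 1 ω) (X 2 ω)) ω)
        + (A 1 0).indicator (fun ω => f (X 1 ω) (X 2 ω)) ω) P :=
      i1.add (hIntPiece 1 0)
    rw [integral_add i2 (hIntPiece 1 1), integral_add i1 (hIntPiece 1 0),
      integral_add (hIntPiece 0 0) (hIntPiece 0 1)]
    rw [(key 0 0 (by norm_num) (by norm_num)).2, (key 0 1 (by norm_num) (by norm_num)).2,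
      (key 1 0 le_rfl (by norm_num)).2, (key 1 1 le_rfl le_rfl).2]
  have hz12 : ∫ ω, f (Y 1 ω) (Y 2 ω) ∂P = 0 :=
    hzero 1 2 (by norm_num) (key 0 0 (by norm_num) (by norm_num)).1
  have hz13 : ∫ ω, f (Y 1 ω) (Y 3 ω) ∂P = 0 :=
    hzero 1 3 (by norm_num) (key 0 1 (by norm_num) (by norm_num)).1
  have hz23 : ∫ ω, f (Y 2 ω) (Y 3 ω) ∂P = 0 :=
    hzero 2 3 (by norm_num) (key 1 1 le_rfl le_rfl).1
  have hmain : ∫ ω, f (X 1 ω) (X 2 ω) ∂P = (1 / 4) * ∫ ω, f (Y 1 ω) (Y 1 ω) ∂P := by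
    rw [hsum, hz12, hz13, hz23, hdiag 2, ← hdiag 1]
    ring
  refine ⟨hmain, ?_⟩
  rw [hmain, hdiag 1]
  -- compute the uniform integral as an interval integral
  have huni : ∫ y, f y y ∂uniformIcc = (1 / 2) * ∫ y in (-1 : ℝ)..1, f y y := by
    rw [uniformIcc, integral_smul_measure]
    rw [intervalIntegral.integral_of_le (by norm_num : (-1 : ℝ) ≤ 1)]
    rw [← MeasureTheory.integral_Icc_eq_integral_Ioc]
    norm_num
  rw [huni]
  ring
end
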